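/- arXiv:2508.06740 — 2 statements merged into one kernel-verified Lean document; each statement's English description precedes it below -/
import Mathlib

section
/- Let k be a commutative ring. The k-linear span of the elements B_I for all I ⊆ [n−1] is a k-subalgebra of k[S_n]; that is, it contains the identity and is closed under multiplication (Solomon's descent algebra theorem). -/
open scoped Classical

noncomputable section

namespace CardShuffle

/-- The descent set of a permutation of `Fin n`, recorded with 1-based positions:
`i ∈ Des w` iff `1 ≤ i ≤ n-1` and (in 1-based terms) `w(i) > w(i+1)`. -/
def Des {n : ℕ} (w : Equiv.Perm (Fin n)) : Finset ℕ :=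
  (Finset.Ico 1 n).filter fun i =>
    ∃ h : i < n, w ⟨i, h⟩ < w ⟨i - 1, Nat.lt_of_le_of_lt (Nat.sub_le i 1) h⟩

/-- The element `B_I` of the group algebra. -/
def BElt (k : Type*) [CommRing k] (n : ℕ) (I : Finset ℕ) :
    MonoidAlgebra k (Equiv.Perm (Fin n)) :=
  ∑ w ∈ Finset.univ.filter fun w : Equiv.Perm (Fin n) => Des w ⊆ I,
    MonoidAlgebra.of k (Equiv.Perm (Fin n)) w

/-- The element `D_I` of the group algebra. -/
def DElt (k : Type*) [CommRing k] (n : ℕ) (I : Finset ℕ) :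
    MonoidAlgebra k (Equiv.Perm (Fin n)) :=
  ∑ w ∈ Finset.univ.filter fun w : Equiv.Perm (Fin n) => Des w = I,
    MonoidAlgebra.of k (Equiv.Perm (Fin n)) w

/-- The longest element `w₀` (i.e. `i ↦ n+1-i` in 1-based terms) as an element of the
group algebra. -/
def w0elt (k : Type*) [CommRing k] (n : ℕ) : MonoidAlgebra k (Equiv.Perm (Fin n)) :=
  MonoidAlgebra.of k (Equiv.Perm (Fin n)) Fin.revPerm

/-- `gapsInv α = gaps⁻¹(α)`: the set of partial sums `α₁+⋯+α_i` for `1 ≤ i ≤ ℓ(α)-1`,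
a subset of `[n-1] = {1,…,n-1}`. -/
def gapsInv {n : ℕ} (α : Composition n) : Finset ℕ :=
  (Finset.Ico 1 α.length).image α.sizeUpTo

/-- The element `B_α := B_{gaps⁻¹(α)}` for a composition `α` of `n`. -/
def BComp (k : Type*) [CommRing k] {n : ℕ} (α : Composition n) :
    MonoidAlgebra k (Equiv.Perm (Fin n)) :=
  BElt k n (gapsInv α)

/-- The reverse of a composition. -/
def revComp {n : ℕ} (α : Composition n) : Composition n where
  blocks := α.blocks.reverse
  blocks_pos := by intro i h; exact α.blocks_pos (List.mem_reverse.mp h)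
  blocks_sum := by rw [List.sum_reverse]; exact α.blocks_sum

/-- A set composition (face) of `[n]`: an ordered tuple of pairwise disjoint nonempty
subsets of `[n]` whose union is `[n]`. -/
structure SetComp (n : ℕ) where
  blocks : List (Finset (Fin n))
  nonempty : ∀ B ∈ blocks, B.Nonempty
  pairwiseDisjoint : blocks.Pairwise Disjoint
  cover : ∀ x : Fin n, ∃ B ∈ blocks, x ∈ B

namespace SetComp

variable {n : ℕ}

/-- The length (number of blocks) of a set composition. -/
abbrev len (F : SetComp n) : ℕ := F.blocks.length

/-- Containment of faces: `F.le G` (i.e. `F ⊑ G`) iff every block of `F` is a subset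
of some block of `G`. -/
def le (F G : SetComp n) : Prop := ∀ B ∈ F.blocks, ∃ C ∈ G.blocks, B ⊆ C

/-- The type of a set composition, as the list of sizes of its blocks. -/
def typeList (F : SetComp n) : List ℕ := F.blocks.map Finset.card

/-- The product of two set compositions: the list of all nonempty intersections
`F_i ∩ G_j`, in lexicographically increasing order of `(i,j)`. -/
def mul (F G : SetComp n) : SetComp n where
  blocks := ((F.blocks.map fun B => G.blocks.map fun C => B ∩ C).flatten).filter
      fun S => S.Nonempty
  nonempty := by
    intro B hB
    simpa using (List.mem_filter.mp hB).2
  pairwiseDisjoint := by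
    apply List.Pairwise.filter
    rw [List.pairwise_flatten]
    constructor
    · intro l hl
      rw [List.mem_map] at hl
      obtain ⟨B, hB, rfl⟩ := hl
      rw [List.pairwise_map]
      exact G.pairwiseDisjoint.imp fun h =>
        h.mono Finset.inter_subset_right Finset.inter_subset_right
    · rw [List.pairwise_map]
      refine F.pairwiseDisjoint.imp ?_
      intro B B' h x hx y hy
      rw [List.mem_map] at hx hy
      obtain ⟨C, _, rfl⟩ := hx
      obtain ⟨C', _, rfl⟩ := hy
      exact h.mono Finset.inter_subset_left Finset.inter_subset_left
  cover := by
    intro x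
    obtain ⟨B, hB, hxB⟩ := F.cover x
    obtain ⟨C, hC, hxC⟩ := G.cover x
    refine ⟨B ∩ C, ?_, Finset.mem_inter.mpr ⟨hxB, hxC⟩⟩
    rw [List.mem_filter]
    constructor
    · rw [List.mem_flatten]
      exact ⟨_, List.mem_map_of_mem hB, List.mem_map_of_mem hC⟩
    · exact decide_eq_true ⟨x, Finset.mem_inter.mpr ⟨hxB, hxC⟩⟩

/-- The one-block set composition `([n])` (for `n = 0`, the empty set composition). -/
def one (n : ℕ) : SetComp n where
  blocks := if (Finset.univ : Finset (Fin n)).Nonempty then [Finset.univ] else []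
  nonempty := by
    intro B hB
    split at hB
    · rw [List.mem_singleton] at hB; subst hB; assumption
    · simp at hB
  pairwiseDisjoint := by split <;> simp
  cover := by
    intro x
    have h : (Finset.univ : Finset (Fin n)).Nonempty := ⟨x, Finset.mem_univ x⟩
    refine ⟨Finset.univ, ?_, Finset.mem_univ x⟩
    rw [if_pos h]
    exact List.mem_singleton.mpr rfl

end SetComp

/-- The knapsack number `n_α(F)`: the number of faces `G` with `F ⊑ G` and `type G = α`. -/
def knap {n : ℕ} (α : Composition n) (F : SetComp n) : ℕ :=
  Nat.card {G : SetComp n // F.le G ∧ G.typeList = α.blocks}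

/-- The signed knapsack number `ñ_α(F) = (-1)^(n - ℓ(F)) n_α(F)`. -/
def sknap {n : ℕ} (α : Composition n) (F : SetComp n) : ℤ :=
  (-1) ^ (n - F.len) * (knap α F : ℤ)

/-- The number of singleton (size-1) blocks of a set composition. -/
def sinF {n : ℕ} (F : SetComp n) : ℕ :=
  (F.blocks.filter fun B => B.card = 1).length

-- ===== auxiliary development =====

variable {n : ℕ}

/-- number of block boundaries of `I` at position `≤ x` -/
private def blk (I : Finset ℕ) (x : Fin n) : ℕ := ((Finset.Icc 1 x.val) ∩ I).card

private lemma blk_mono (I : Finset ℕ) {x y : Fin n} (h : x ≤ y) : blk I x ≤ blk I y :=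
  Finset.card_le_card (Finset.inter_subset_inter
    (Finset.Icc_subset_Icc_right h) (Finset.Subset.refl _))

private lemma mem_Des_iff {w : Equiv.Perm (Fin n)} {x : Fin n} (hx : x.val + 1 < n) :
    x.val + 1 ∈ Des w ↔ w ⟨x.val + 1, hx⟩ < w x := by
  unfold Des
  rw [Finset.mem_filter, Finset.mem_Ico]
  constructor
  · rintro ⟨⟨-, -⟩, h, hlt⟩
    exact hlt
  · intro h
    exact ⟨⟨by omega, hx⟩, hx, h⟩

private lemma blk_succ (I : Finset ℕ) {x : Fin n} (hx : x.val + 1 < n) :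
    blk I ⟨x.val + 1, hx⟩ = blk I x + if x.val + 1 ∈ I then 1 else 0 := by
  unfold blk
  have hIcc : Finset.Icc 1 (x.val + 1) = insert (x.val + 1) (Finset.Icc 1 x.val) := by
    ext j; simp only [Finset.mem_Icc, Finset.mem_insert]; omega
  rw [hIcc]
  by_cases hmem : x.val + 1 ∈ I
  · rw [if_pos hmem, Finset.insert_inter_of_mem hmem,
      Finset.card_insert_of_notMem (by simp [Finset.mem_Icc])]
  · rw [if_neg hmem, Finset.insert_inter_of_notMem hmem, add_zero]

private lemma not_mem_of_blk_eq {I : Finset ℕ} {x : Fin n} (hx : x.val + 1 < n)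
    (h : blk I x = blk I ⟨x.val + 1, hx⟩) : x.val + 1 ∉ I := by
  intro hmem
  rw [blk_succ I hx, if_pos hmem] at h
  omega

private lemma ascent {u : Equiv.Perm (Fin n)} {I : Finset ℕ} (hu : Des u ⊆ I)
    {x : Fin n} (hx : x.val + 1 < n) (hnI : x.val + 1 ∉ I) :
    u x < u ⟨x.val + 1, hx⟩ := by
  have hnd : x.val + 1 ∉ Des u := fun hmem => hnI (hu hmem)
  rw [mem_Des_iff hx] at hnd
  rcases lt_or_eq_of_le (not_lt.mp hnd) with h | h
  · exact h
  · exfalso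
    have := congrArg Fin.val (u.injective h)
    simp at this

private lemma lt_of_blk_eq {u : Equiv.Perm (Fin n)} {I : Finset ℕ} (hu : Des u ⊆ I)
    {x y : Fin n} (hxy : x < y) (hblk : blk I x = blk I y) : u x < u y := by
  obtain ⟨d, hd⟩ : ∃ d, y.val = x.val + d + 1 := ⟨y.val - x.val - 1, by
    have := (Fin.lt_def).mp hxy; omega⟩
  induction d generalizing y with
  | zero =>
    have hx1 : x.val + 1 < n := by have := y.isLt; omega
    have ey : y = ⟨x.val + 1, hx1⟩ := Fin.ext (show y.val = x.val + 1 by omega)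
    rw [ey] at hblk ⊢
    exact ascent hu hx1 (not_mem_of_blk_eq hx1 hblk)
  | succ d ih =>
    have hm : x.val + d + 1 < n := by have := y.isLt; omega
    set m : Fin n := ⟨x.val + d + 1, hm⟩ with hmdef
    have hmval : (m : ℕ) = x.val + d + 1 := rfl
    have hxm : x < m := by rw [Fin.lt_def]; omega
    have hmy : m ≤ y := by rw [Fin.le_def]; omega
    have h1 : blk I x = blk I m :=
      le_antisymm (blk_mono I hxm.le) (hblk ▸ blk_mono I hmy)
    have h2 : blk I m = blk I y := by omega
    have hum : u x < u m := ih hxm h1 rfl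
    have hy1 : m.val + 1 < n := by have := y.isLt; omega
    have ey : y = ⟨m.val + 1, hy1⟩ := Fin.ext (show y.val = m.val + 1 by omega)
    rw [ey] at h2 ⊢
    exact hum.trans (ascent hu hy1 (not_mem_of_blk_eq hy1 h2))

private lemma des_subset_of_consec {u : Equiv.Perm (Fin n)} {I : Finset ℕ}
    (h : ∀ (x : Fin n) (hx : x.val + 1 < n), blk I x = blk I ⟨x.val + 1, hx⟩ →
      u x < u ⟨x.val + 1, hx⟩) :
    Des u ⊆ I := by
  intro i hi
  unfold Des at hi
  rw [Finset.mem_filter, Finset.mem_Ico] at hi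
  obtain ⟨⟨h1, h2⟩, hn, hd⟩ := hi
  by_contra hiI
  set x : Fin n := ⟨i - 1, by omega⟩ with hxdef
  have hx1 : x.val + 1 < n := by simp [hxdef]; omega
  have heq : blk I x = blk I ⟨x.val + 1, hx1⟩ := by
    rw [blk_succ I hx1]
    have : x.val + 1 = i := by simp [hxdef]; omega
    rw [this, if_neg hiI, add_zero]
  have hlt := h x hx1 heq
  have e1 : (⟨x.val + 1, hx1⟩ : Fin n) = ⟨i, hn⟩ := Fin.ext (by simp [hxdef]; omega)
  rw [e1] at hlt
  exact lt_asymm hlt hd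

private lemma strictMono_key_of_des {u : Equiv.Perm (Fin n)} {I : Finset ℕ} (hu : Des u ⊆ I) :
    StrictMono fun a : Fin n => (toLex (blk I a, (u a).val) : ℕ ×ₗ ℕ) := by
  intro a b hab
  rw [Prod.Lex.lt_iff]
  rcases lt_or_eq_of_le (blk_mono I hab.le) with h | h
  · exact Or.inl h
  · exact Or.inr ⟨h, lt_of_blk_eq hu hab h⟩

private lemma sort_eq_of_strictMono {α : Type*} [LinearOrder α] {f : Fin n → α}
    {σ : Equiv.Perm (Fin n)} (h : StrictMono (f ∘ σ)) : Tuple.sort f = σ := by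
  have hinj : Function.Injective f := by
    intro a b hab
    have : (f ∘ σ) (σ.symm a) = (f ∘ σ) (σ.symm b) := by
      simp [Function.comp, Equiv.apply_symm_apply, hab]
    have := h.injective this
    simpa using congrArg σ this
  have heq := Tuple.unique_monotone h.monotone (Tuple.monotone_sort f)
  exact Equiv.ext fun x => (hinj (congrFun heq x)).symm

/-- the sorting key used in the bijection -/
private def sortKey (I : Finset ℕ) (v w₀ : Equiv.Perm (Fin n)) : Fin n → ℕ ×ₗ ℕ :=
  fun x => toLex (blk I (v x), (w₀ x).val)

private lemma sortKey_injective (I : Finset ℕ) (v w₀ : Equiv.Perm (Fin n)) :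
    Function.Injective (sortKey I v w₀) := by
  intro a b h
  have : (w₀ a).val = (w₀ b).val := congrArg (fun z => (ofLex z).2) h
  exact w₀.injective (Fin.ext this)

/-- the bijection on factorization pairs -/
private def phi (I : Finset ℕ) (w₀ : Equiv.Perm (Fin n))
    (p : Equiv.Perm (Fin n) × Equiv.Perm (Fin n)) :
    Equiv.Perm (Fin n) × Equiv.Perm (Fin n) :=
  (w₀ * Tuple.sort (sortKey I p.2 w₀), (Tuple.sort (sortKey I p.2 w₀))⁻¹)

private def pairSet (I J : Finset ℕ) (w : Equiv.Perm (Fin n)) :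
    Finset (Equiv.Perm (Fin n) × Equiv.Perm (Fin n)) :=
  Finset.univ.filter fun p => p.1 * p.2 = w ∧ Des p.1 ⊆ I ∧ Des p.2 ⊆ J

private lemma phi_roundtrip {I : Finset ℕ} {w u v : Equiv.Perm (Fin n)}
    (huv : u * v = w) (hu : Des u ⊆ I) : Tuple.sort (sortKey I v w) = v⁻¹ := by
  apply sort_eq_of_strictMono
  have hwv : ∀ a, w (v⁻¹ a) = u a := by
    intro a
    rw [← huv]
    simp [Equiv.Perm.mul_apply]
  have hfun : (sortKey I v w ∘ ⇑v⁻¹) = fun a : Fin n => (toLex (blk I a, (u a).val) : ℕ ×ₗ ℕ) := by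
    funext a
    simp only [Function.comp, sortKey, hwv]
    simp only [Equiv.Perm.coe_inv, Equiv.apply_symm_apply]
  rw [hfun]
  exact strictMono_key_of_des hu

private lemma phi_spec {I J : Finset ℕ} {w w' : Equiv.Perm (Fin n)} (hD : Des w = Des w')
    {p : Equiv.Perm (Fin n) × Equiv.Perm (Fin n)} (hp : p ∈ pairSet I J w) :
    phi I w' p ∈ pairSet I J w' ∧ ∀ x, blk I ((phi I w' p).2 x) = blk I (p.2 x) := by
  obtain ⟨u, v⟩ := p
  rw [pairSet, Finset.mem_filter] at hp
  obtain ⟨-, huv, hu, hv⟩ := hp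
  set K : Fin n → ℕ ×ₗ ℕ := sortKey I v w' with hK
  set σ : Equiv.Perm (Fin n) := Tuple.sort K with hσ
  have hmon : Monotone (K ∘ σ) := Tuple.monotone_sort K
  have hsm : StrictMono (K ∘ σ) :=
    hmon.strictMono_of_injective ((sortKey_injective I v w').comp σ.injective)
  -- first components
  have hfst : ∀ a, blk I (v (σ a)) = blk I a := by
    have hf1 : Monotone ((fun x => blk I (v x)) ∘ σ) := by
      intro a b hab
      have := hmon hab
      simp only [Function.comp, hK, sortKey, Prod.Lex.le_iff] at this
      rcases this with h | ⟨h, -⟩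
      · exact h.le
      · exact h.le
    have hf2 : Monotone ((fun x => blk I (v x)) ∘ ⇑v⁻¹) := by
      intro a b hab
      simp only [Function.comp, Equiv.Perm.coe_inv, Equiv.apply_symm_apply]
      exact blk_mono I hab
    have := Tuple.unique_monotone hf1 hf2
    intro a
    have h3 := congrFun this a
    simpa using h3
  have hblkv' : ∀ x, blk I (σ⁻¹ x) = blk I (v x) := by
    intro x
    have := hfst (σ⁻¹ x)
    simpa using this.symm
  -- the key evaluated through σ
  have hKσ : ∀ a, (K ∘ σ) a = toLex (blk I a, ((w' * σ) a).val) := by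
    intro a
    simp only [Function.comp, hK, sortKey, hfst a, Equiv.Perm.mul_apply]
  refine ⟨?_, ?_⟩
  · rw [pairSet, Finset.mem_filter]
    refine ⟨Finset.mem_univ _, ?_, ?_, ?_⟩
    · simp [phi, mul_assoc]
    · -- Des (w' * σ) ⊆ I
      show Des (w' * Tuple.sort (sortKey I v w')) ⊆ I
      rw [← hK, ← hσ]
      apply des_subset_of_consec
      intro x hx hblk
      have hlt : x < (⟨x.val + 1, hx⟩ : Fin n) := by rw [Fin.lt_def]; exact Nat.lt_succ_self _
      have := hsm hlt
      rw [hKσ, hKσ, Prod.Lex.lt_iff] at this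
      rcases this with h | ⟨-, h⟩
      · exfalso; rw [hblk] at h; exact lt_irrefl _ h
      · exact h
    · -- Des σ⁻¹ ⊆ J
      show Des (Tuple.sort (sortKey I v w'))⁻¹ ⊆ J
      rw [← hK, ← hσ]
      apply des_subset_of_consec
      intro x hx hblkJ
      set x1 : Fin n := ⟨x.val + 1, hx⟩ with hx1def
      have hxJ : x.val + 1 ∉ J := not_mem_of_blk_eq hx hblkJ
      have h1 : v x < v x1 := ascent hv hx hxJ
      have hKlt : K x < K x1 := by
        rw [hK]
        show (toLex (blk I (v x), (w' x).val) : ℕ ×ₗ ℕ) < toLex (blk I (v x1), (w' x1).val)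
        rw [Prod.Lex.lt_iff]
        rcases lt_or_eq_of_le (blk_mono I h1.le) with h | h
        · exact Or.inl h
        · refine Or.inr ⟨h, ?_⟩
          have hW : w x < w x1 := by
            have := lt_of_blk_eq hu h1 h
            rw [← huv]
            simpa [Equiv.Perm.mul_apply] using this
          have hnd : x.val + 1 ∉ Des w := by
            rw [mem_Des_iff hx]
            exact not_lt.mpr hW.le
          rw [hD] at hnd
          rw [mem_Des_iff hx] at hnd
          rcases lt_or_eq_of_le (not_lt.mp hnd) with h' | h'
          · exact h'
          · exfalso
            have := congrArg Fin.val (w'.injective h')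
            simp [hx1def] at this
      have := hsm.lt_iff_lt (a := σ⁻¹ x) (b := σ⁻¹ x1)
      simp only [Function.comp, Equiv.Perm.coe_inv, Equiv.apply_symm_apply] at this
      exact this.mp hKlt
  · intro x
    show blk I ((Tuple.sort (sortKey I v w'))⁻¹ x) = blk I (v x)
    rw [← hK, ← hσ]
    exact hblkv' x

private lemma phi_phi {I J : Finset ℕ} {w w' : Equiv.Perm (Fin n)} (hD : Des w = Des w')
    {p : Equiv.Perm (Fin n) × Equiv.Perm (Fin n)} (hp : p ∈ pairSet I J w) :
    phi I w (phi I w' p) = p := by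
  have hspec := (phi_spec hD hp).2
  obtain ⟨u, v⟩ := p
  rw [pairSet, Finset.mem_filter] at hp
  obtain ⟨-, huv, hu, hv⟩ := hp
  have hKeq : sortKey I (phi I w' (u, v)).2 w = sortKey I v w := by
    funext x
    simp only [sortKey]
    rw [hspec x]
  have hsort : Tuple.sort (sortKey I (phi I w' (u, v)).2 w) = v⁻¹ := by
    rw [hKeq]
    exact phi_roundtrip huv hu
  show (w * Tuple.sort (sortKey I (phi I w' (u, v)).2 w),
      (Tuple.sort (sortKey I (phi I w' (u, v)).2 w))⁻¹) = (u, v)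
  rw [hsort]
  refine Prod.ext ?_ (by simp)
  show w * v⁻¹ = u
  rw [← huv]
  group

private lemma pairSet_card_eq {I J : Finset ℕ} {w w' : Equiv.Perm (Fin n)}
    (hD : Des w = Des w') : (pairSet I J w).card = (pairSet I J w').card :=
  Finset.card_bij' (fun p _ => phi I w' p) (fun p _ => phi I w p)
    (fun p hp => (phi_spec hD hp).1) (fun p hp => (phi_spec hD.symm hp).1)
    (fun p hp => phi_phi hD hp) (fun p hp => phi_phi hD.symm hp)

private def genSet (k : Type*) [CommRing k] (n : ℕ) :
    Set (MonoidAlgebra k (Equiv.Perm (Fin n))) :=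
  {x | ∃ I : Finset ℕ, I ⊆ Finset.Ico 1 n ∧ x = BElt k n I}

private lemma BElt_empty (k : Type*) [CommRing k] : BElt k n (∅ : Finset ℕ) = 1 := by
  rw [BElt]
  have hset : (Finset.univ.filter fun w : Equiv.Perm (Fin n) => Des w ⊆ (∅ : Finset ℕ))
      = {1} := by
    ext w
    simp only [Finset.mem_filter, Finset.mem_univ, true_and, Finset.mem_singleton,
      Finset.subset_empty]
    constructor
    · intro h
      have hsub : Des w ⊆ (∅ : Finset ℕ) := le_of_eq h
      have hsm : StrictMono ⇑w := by
        intro a b hab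
        refine lt_of_blk_eq hsub hab ?_
        simp [blk, Finset.eq_empty_iff_forall_notMem]
      have hrange : Set.range ⇑w = Set.range (id : Fin n → Fin n) := by
        rw [Set.range_id, Set.range_eq_univ.mpr w.surjective]
      have : ⇑w = id := (StrictMono.range_inj hsm strictMono_id).mp hrange
      exact Equiv.ext fun x => congrFun this x
    · rintro rfl
      ext i
      simp only [Des, Finset.mem_filter, Finset.mem_Ico, Finset.notMem_empty, iff_false,
        not_and, not_exists]
      intro _ h
      simp only [Equiv.Perm.one_apply, Fin.lt_def]
      omega
  rw [hset, Finset.sum_singleton, map_one]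

private lemma BElt_eq_sum_DElt (k : Type*) [CommRing k] (I : Finset ℕ) :
    BElt k n I = ∑ K ∈ I.powerset, DElt k n K := by
  rw [BElt]
  rw [← Finset.sum_fiberwise_of_maps_to (t := I.powerset) (g := Des)
    (fun w hw => Finset.mem_powerset.mpr (Finset.mem_filter.mp hw).2)
    (fun w => MonoidAlgebra.of k (Equiv.Perm (Fin n)) w)]
  refine Finset.sum_congr rfl fun K hK => ?_
  rw [DElt]
  refine Finset.sum_congr ?_ fun _ _ => rfl
  ext w
  simp only [Finset.mem_filter, Finset.mem_univ, true_and]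
  constructor
  · rintro ⟨-, h⟩; exact h
  · rintro rfl
    exact ⟨Finset.mem_powerset.mp hK, rfl⟩

private lemma DElt_mem_span (k : Type*) [CommRing k] :
    ∀ K : Finset ℕ, K ⊆ Finset.Ico 1 n →
      DElt k n K ∈ Submodule.span k (genSet k n) := by
  intro K
  induction K using Finset.strongInduction with
  | _ K ih =>
    intro hK
    have hB : BElt k n K = DElt k n K + ∑ K' ∈ K.powerset.erase K, DElt k n K' := by
      rw [BElt_eq_sum_DElt, ← Finset.add_sum_erase _ _ (Finset.mem_powerset_self K)]
    have h1 : DElt k n K = BElt k n K - ∑ K' ∈ K.powerset.erase K, DElt k n K' := by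
      rw [hB]; abel
    rw [h1]
    refine Submodule.sub_mem _ (Submodule.subset_span ⟨K, hK, rfl⟩)
      (Submodule.sum_mem _ fun K' hK' => ?_)
    have h2 : K' ⊂ K :=
      ⟨Finset.mem_powerset.mp (Finset.mem_of_mem_erase hK'),
        fun h' => Finset.ne_of_mem_erase hK'
          (Finset.Subset.antisymm (Finset.mem_powerset.mp (Finset.mem_of_mem_erase hK')) h')⟩
    exact ih K' h2 (h2.subset.trans hK)

set_option maxHeartbeats 2000000 in
private lemma BElt_mul_mem (k : Type*) [CommRing k] (I J : Finset ℕ) :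
    BElt k n I * BElt k n J ∈ Submodule.span k (genSet k n) := by
  classical
  have hprod : BElt k n I * BElt k n J =
      ∑ w : Equiv.Perm (Fin n), (pairSet I J w).card •
        MonoidAlgebra.of k (Equiv.Perm (Fin n)) w := by
    rw [BElt, BElt, Finset.sum_mul_sum]
    simp_rw [← map_mul]
    rw [← Finset.sum_product']
    rw [← Finset.sum_fiberwise_of_maps_to (t := Finset.univ)
      (g := fun p : Equiv.Perm (Fin n) × Equiv.Perm (Fin n) => p.1 * p.2)
      (fun p _ => Finset.mem_univ _)
      (fun p => MonoidAlgebra.of k (Equiv.Perm (Fin n)) (p.1 * p.2))]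
    refine Finset.sum_congr rfl fun w _ => ?_
    have hset : (((Finset.univ.filter fun u : Equiv.Perm (Fin n) => Des u ⊆ I) ×ˢ
        (Finset.univ.filter fun v : Equiv.Perm (Fin n) => Des v ⊆ J)).filter
          fun p => p.1 * p.2 = w) = pairSet I J w := by
      ext p
      simp only [pairSet, Finset.mem_filter, Finset.mem_product, Finset.mem_univ, true_and]
      tauto
    rw [hset]
    rw [Finset.sum_congr rfl (fun p hp => by
      rw [show p.1 * p.2 = w from ((Finset.mem_filter.mp hp).2).1])]
    rw [Finset.sum_const]
  rw [hprod]
  set N : Finset ℕ → ℕ := fun K =>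
    if h : ∃ w : Equiv.Perm (Fin n), Des w = K then (pairSet I J h.choose).card else 0
    with hN
  have hNval : ∀ w : Equiv.Perm (Fin n), (pairSet I J w).card = N (Des w) := by
    intro w
    have hex : ∃ w' : Equiv.Perm (Fin n), Des w' = Des w := ⟨w, rfl⟩
    rw [hN]
    simp only [dif_pos hex]
    exact pairSet_card_eq hex.choose_spec.symm
  rw [Finset.sum_congr rfl fun w _ => by rw [hNval w]]
  rw [← Finset.sum_fiberwise_of_maps_to (t := (Finset.Ico 1 n).powerset) (g := Des)
    (fun w _ => Finset.mem_powerset.mpr (Finset.filter_subset _ _))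
    (fun w => N (Des w) • MonoidAlgebra.of k (Equiv.Perm (Fin n)) w)]
  refine Submodule.sum_mem _ fun K hK => ?_
  have : ∑ w ∈ Finset.univ.filter fun w : Equiv.Perm (Fin n) => Des w = K,
      N (Des w) • MonoidAlgebra.of k (Equiv.Perm (Fin n)) w = N K • DElt k n K := by
    rw [DElt, Finset.smul_sum]
    refine Finset.sum_congr rfl fun w hw => ?_
    rw [(Finset.mem_filter.mp hw).2]
  rw [this, ← Nat.cast_smul_eq_nsmul k (N K) (DElt k n K)]
  exact Submodule.smul_mem _ _ (DElt_mem_span k K (Finset.mem_powerset.mp hK))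


/-- **Solomon.** Let `k` be a commutative ring.  The `k`-linear span of
the elements `B_I` for `I ⊆ [n-1]` contains the identity of `k[S_n]` and is closed
under multiplication; i.e. it is a `k`-subalgebra of `k[S_n]`. -/
theorem descent_algebra_is_subalgebra (k : Type*) [CommRing k] (n : ℕ) :
    (1 : MonoidAlgebra k (Equiv.Perm (Fin n))) ∈
      Submodule.span k {x : MonoidAlgebra k (Equiv.Perm (Fin n)) |
        ∃ I : Finset ℕ, I ⊆ Finset.Ico 1 n ∧ x = BElt k n I} ∧
    ∀ a ∈ Submodule.span k {x : MonoidAlgebra k (Equiv.Perm (Fin n)) |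
        ∃ I : Finset ℕ, I ⊆ Finset.Ico 1 n ∧ x = BElt k n I},
      ∀ b ∈ Submodule.span k {x : MonoidAlgebra k (Equiv.Perm (Fin n)) |
        ∃ I : Finset ℕ, I ⊆ Finset.Ico 1 n ∧ x = BElt k n I},
        a * b ∈ Submodule.span k {x : MonoidAlgebra k (Equiv.Perm (Fin n)) |
          ∃ I : Finset ℕ, I ⊆ Finset.Ico 1 n ∧ x = BElt k n I} := by
  have hgen : {x : MonoidAlgebra k (Equiv.Perm (Fin n)) |
      ∃ I : Finset ℕ, I ⊆ Finset.Ico 1 n ∧ x = BElt k n I} = genSet k n := rfl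
  rw [hgen]
  constructor
  · exact Submodule.subset_span ⟨∅, Finset.empty_subset _, (BElt_empty k).symm⟩
  · intro a ha b hb
    induction ha using Submodule.span_induction with
    | mem x hx =>
      induction hb using Submodule.span_induction with
      | mem y hy =>
        obtain ⟨I, hI, rfl⟩ := hx
        obtain ⟨J, hJ, rfl⟩ := hy
        exact BElt_mul_mem k I J
      | zero => rw [mul_zero]; exact Submodule.zero_mem _
      | add y z _ _ h1 h2 => rw [mul_add]; exact Submodule.add_mem _ h1 h2
      | smul c y _ h1 => rw [mul_smul_comm]; exact Submodule.smul_mem _ c h1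
    | zero => rw [zero_mul]; exact Submodule.zero_mem _
    | add x y _ _ h1 h2 => rw [add_mul]; exact Submodule.add_mem _ h1 h2
    | smul c x _ h1 => rw [smul_mul_assoc]; exact Submodule.smul_mem _ c h1


end CardShuffle
end
end

section
/- Let F be a set composition of [n]. Then Σ_{G ∈ CF, F ⊑ G} (−1)^{n−ℓ(G)} = (−1)^{n−ℓ(F)}, the sum ranging over all set compositions G of [n] containing F. -/
open scoped Classical

noncomputable section

namespace CardShuffle

/-- Auxiliary: an ordered set partition of the finset `s`. -/
def IsOSP {α : Type*} (s : Finset α) (L : List (Finset α)) : Prop :=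
  (∀ B ∈ L, B.Nonempty) ∧ L.Pairwise Disjoint ∧ (∀ B ∈ L, B ⊆ s) ∧ ∀ x ∈ s, ∃ B ∈ L, x ∈ B

lemma isOSP_nil_iff {α : Type*} (s : Finset α) : IsOSP s ([] : List (Finset α)) ↔ s = ∅ := by
  constructor
  · rintro ⟨-, -, -, h⟩
    by_contra hs
    obtain ⟨x, hx⟩ := Finset.nonempty_iff_ne_empty.mpr hs
    obtain ⟨B, hB, -⟩ := h x hx
    simp at hB
  · rintro rfl
    exact ⟨by simp, by simp, by simp, by simp⟩

lemma isOSP_cons_iff {α : Type*} [DecidableEq α] {s B : Finset α} (hB : B.Nonempty)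
    (hBs : B ⊆ s) (L : List (Finset α)) :
    IsOSP s (B :: L) ↔ IsOSP (s \ B) L := by
  constructor
  · rintro ⟨h1, h2, h3, h4⟩
    rw [List.pairwise_cons] at h2
    refine ⟨fun C hC => h1 C (List.mem_cons_of_mem _ hC), h2.2, ?_, ?_⟩
    · intro C hC
      intro x hx
      rw [Finset.mem_sdiff]
      refine ⟨h3 C (List.mem_cons_of_mem _ hC) hx, ?_⟩
      exact Finset.disjoint_right.mp (h2.1 C hC) hx
    · intro x hx
      rw [Finset.mem_sdiff] at hx
      obtain ⟨C, hC, hxC⟩ := h4 x hx.1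
      rcases List.mem_cons.mp hC with rfl | hC
      · exact absurd hxC hx.2
      · exact ⟨C, hC, hxC⟩
  · rintro ⟨h1, h2, h3, h4⟩
    refine ⟨?_, ?_, ?_, ?_⟩
    · intro C hC
      rcases List.mem_cons.mp hC with rfl | hC
      · exact hB
      · exact h1 C hC
    · rw [List.pairwise_cons]
      refine ⟨fun C hC => ?_, h2⟩
      have := h3 C hC
      exact Finset.disjoint_left.mpr fun x hxB hxC =>
        (Finset.mem_sdiff.mp (this hxC)).2 hxB
    · intro C hC
      rcases List.mem_cons.mp hC with rfl | hC
      · exact hBs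
      · exact (h3 C hC).trans (Finset.sdiff_subset)
    · intro x hx
      by_cases hxB : x ∈ B
      · exact ⟨B, List.mem_cons_self, hxB⟩
      · obtain ⟨C, hC, hxC⟩ := h4 x (Finset.mem_sdiff.mpr ⟨hx, hxB⟩)
        exact ⟨C, List.mem_cons_of_mem _ hC, hxC⟩

lemma neg_one_pow_sub {k m : ℕ} (h : k ≤ m) :
    (-1 : ℤ) ^ (m - k) = (-1) ^ m * (-1) ^ k := by
  have h1 : (-1 : ℤ) ^ (m - k) * (-1) ^ k = (-1) ^ m := by
    rw [← pow_add, Nat.sub_add_cancel h]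
  have h2 : (-1 : ℤ) ^ k * (-1) ^ k = 1 := by
    rw [← pow_add, neg_one_pow_eq_one_iff_even (by norm_num)]
    exact ⟨k, rfl⟩
  calc (-1 : ℤ) ^ (m - k) = (-1) ^ (m - k) * ((-1) ^ k * (-1) ^ k) := by rw [h2, mul_one]
    _ = ((-1) ^ (m - k) * (-1) ^ k) * (-1) ^ k := by ring
    _ = (-1) ^ m * (-1) ^ k := by rw [h1]

lemma osp_sum {α : Type*} [DecidableEq α] (m : ℕ) : ∀ (s : Finset α), s.card = m →
    ∀ (T : Finset (List (Finset α))), (∀ L, L ∈ T ↔ IsOSP s L) →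
    ∑ L ∈ T, (-1 : ℤ) ^ L.length = (-1) ^ s.card := by
  induction m using Nat.strong_induction_on with
  | _ m ih =>
    intro s hm T hT
    rcases Finset.eq_empty_or_nonempty s with rfl | hs
    · have : T = {[]} := by
        ext L
        rw [hT, Finset.mem_singleton]
        constructor
        · rintro ⟨h1, -, h3, -⟩
          cases L with
          | nil => rfl
          | cons B L =>
            have := h1 B (List.mem_cons_self)
            have h3' := h3 B (List.mem_cons_self)
            obtain ⟨x, hx⟩ := this
            simpa using h3' hx
        · rintro rfl
          exact (isOSP_nil_iff _).mpr rfl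
      rw [this]
      simp
    · set P := s.powerset.filter (fun B => B.Nonempty) with hP
      set TB := fun B : Finset α => (T.filter fun L => L.head? = some B).image List.tail with hTBdef
      have hTB : ∀ B ∈ P, ∀ L', L' ∈ TB B ↔ IsOSP (s \ B) L' := by
        intro B hBP L'
        rw [hP, Finset.mem_filter, Finset.mem_powerset] at hBP
        constructor
        · intro h
          rw [hTBdef] at h
          simp only [Finset.mem_image, Finset.mem_filter] at h
          obtain ⟨L, ⟨hLT, hhead⟩, rfl⟩ := h
          cases L with
          | nil => simp at hhead
          | cons C L =>
            simp only [List.head?] at hhead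
            have : C = B := by simpa using hhead
            subst this
            exact (isOSP_cons_iff hBP.2 hBP.1 _).mp ((hT _).mp hLT)
        · intro h
          rw [hTBdef]
          simp only [Finset.mem_image, Finset.mem_filter]
          refine ⟨B :: L', ⟨(hT _).mpr ((isOSP_cons_iff hBP.2 hBP.1 _).mpr h), rfl⟩, rfl⟩
      have hsplit : T = P.biUnion fun B => (TB B).image (B :: ·) := by
        ext L
        simp only [Finset.mem_biUnion, Finset.mem_image]
        rw [hT]
        constructor
        · intro h
          obtain ⟨h1, h2, h3, h4⟩ := h
          cases L with
          | nil =>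
            obtain ⟨x, hx⟩ := hs
            obtain ⟨B, hB, -⟩ := h4 x hx
            simp at hB
          | cons B L' =>
            have hBne : B.Nonempty := h1 B (List.mem_cons_self)
            have hBs : B ⊆ s := h3 B (List.mem_cons_self)
            have hBP : B ∈ P := by
              rw [hP, Finset.mem_filter, Finset.mem_powerset]; exact ⟨hBs, hBne⟩
            refine ⟨B, hBP, L', ?_, rfl⟩
            rw [hTB B hBP]
            exact (isOSP_cons_iff hBne hBs _).mp ⟨h1, h2, h3, h4⟩
        · rintro ⟨B, hBP, L', hL', rfl⟩
          have hBP' := hBP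
          rw [hP, Finset.mem_filter, Finset.mem_powerset] at hBP'
          exact (isOSP_cons_iff hBP'.2 hBP'.1 _).mpr ((hTB B hBP L').mp hL')
      have hdisj : (P : Set (Finset α)).PairwiseDisjoint
          (fun B => (TB B).image (B :: ·)) := by
        intro B hB C hC hBC
        apply Finset.disjoint_left.mpr
        intro L hLB hLC
        simp only [Finset.mem_image] at hLB hLC
        obtain ⟨L1, -, rfl⟩ := hLB
        obtain ⟨L2, -, hL2⟩ := hLC
        simp only [List.cons.injEq] at hL2
        exact hBC hL2.1.symm
      rw [hsplit, Finset.sum_biUnion hdisj]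
      have hterm : ∀ B ∈ P, ∑ L ∈ (TB B).image (B :: ·), (-1 : ℤ) ^ L.length
          = -((-1) ^ s.card * (-1) ^ B.card) := by
        intro B hBP
        have hBP' := hBP
        rw [hP, Finset.mem_filter, Finset.mem_powerset] at hBP'
        rw [Finset.sum_image (by intro x _ y _ h; simpa using h)]
        have hcard : (s \ B).card = s.card - B.card := Finset.card_sdiff_of_subset hBP'.1
        have hlt : (s \ B).card < m := by
          rw [hcard, ← hm]
          have h1 := Finset.card_pos.mpr hBP'.2
          have h2 := Finset.card_le_card hBP'.1
          omega
        have := ih _ hlt (s \ B) rfl (TB B) (hTB B hBP)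
        calc ∑ L ∈ TB B, (-1 : ℤ) ^ (B :: L).length
            = ∑ L ∈ TB B, (-1) * (-1 : ℤ) ^ L.length := by
              apply Finset.sum_congr rfl; intro L _
              rw [List.length_cons, pow_succ]; ring
          _ = (-1) * ∑ L ∈ TB B, (-1 : ℤ) ^ L.length := by rw [Finset.mul_sum]
          _ = (-1) * (-1) ^ (s \ B).card := by rw [this]
          _ = -((-1) ^ s.card * (-1) ^ B.card) := by
              rw [hcard, neg_one_pow_sub (Finset.card_le_card hBP'.1)]; ring
      rw [Finset.sum_congr rfl hterm]
      have hPsum : ∑ B ∈ P, (-1 : ℤ) ^ B.card = -1 := by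
        have h0 : ∑ B ∈ s.powerset, (-1 : ℤ) ^ B.card = 0 :=
          Finset.sum_powerset_neg_one_pow_card_of_nonempty hs
        have hsp : s.powerset.filter (fun B => ¬ B.Nonempty) = {∅} := by
          ext B
          simp only [Finset.mem_filter, Finset.mem_powerset,
            Finset.not_nonempty_iff_eq_empty, Finset.mem_singleton]
          constructor
          · rintro ⟨-, h⟩; exact h
          · rintro rfl; exact ⟨Finset.empty_subset _, rfl⟩
        have := Finset.sum_filter_add_sum_filter_not s.powerset (fun B => B.Nonempty)
          (fun B => (-1 : ℤ) ^ B.card)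
        rw [h0] at this
        rw [hsp] at this
        simp only [Finset.sum_singleton, Finset.card_empty, pow_zero] at this
        rw [hP]
        linarith
      calc ∑ B ∈ P, -((-1 : ℤ) ^ s.card * (-1) ^ B.card)
          = -((-1) ^ s.card * ∑ B ∈ P, (-1 : ℤ) ^ B.card) := by
            rw [Finset.mul_sum, ← Finset.sum_neg_distrib]
        _ = (-1) ^ s.card := by rw [hPsum]; ring


namespace SetComp

variable {n : ℕ}

lemma ext' {G G' : SetComp n} (h : G.blocks = G'.blocks) : G = G' := by
  cases G; cases G'; cases h; rfl

lemma get_disjoint (G : SetComp n) {i j : Fin G.blocks.length} (hij : i ≠ j) :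
    Disjoint (G.blocks.get i) (G.blocks.get j) := by
  rcases lt_or_gt_of_ne hij with h | h
  · exact List.pairwise_iff_get.mp G.pairwiseDisjoint i j h
  · exact (List.pairwise_iff_get.mp G.pairwiseDisjoint j i h).symm

lemma index_eq (G : SetComp n) {i j : Fin G.blocks.length} {x : Fin n}
    (hx : x ∈ G.blocks.get i) (hx' : x ∈ G.blocks.get j) : i = j := by
  by_contra h
  exact absurd hx' (Finset.disjoint_left.mp (G.get_disjoint h) hx)

lemma eq_of_mem_mem (G : SetComp n) {C C' : Finset (Fin n)} (hC : C ∈ G.blocks)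
    (hC' : C' ∈ G.blocks) {x : Fin n} (hx : x ∈ C) (hx' : x ∈ C') : C = C' := by
  obtain ⟨i, rfl⟩ := List.mem_iff_get.mp hC
  obtain ⟨j, rfl⟩ := List.mem_iff_get.mp hC'
  exact congrArg _ (G.index_eq hx hx')

lemma len_le (G : SetComp n) : G.len ≤ n := by
  have hpick : ∀ i : Fin G.blocks.length, ∃ x, x ∈ G.blocks.get i :=
    fun i => G.nonempty _ (G.blocks.get_mem _)
  choose f hf using hpick
  have hinj : Function.Injective f := fun i j h => G.index_eq (hf i) (h ▸ hf j)
  simpa using Fintype.card_le_of_injective f hinj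

/-- The set of indices of blocks of `F` contained in `C`. -/
def idxOf (F : SetComp n) (C : Finset (Fin n)) : Finset (Fin F.blocks.length) :=
  Finset.univ.filter fun i => F.blocks.get i ⊆ C

end SetComp

/-- Let `F` be a set composition of `[n]`.  Then
`Σ_{G ∈ CF, F ⊑ G} (-1)^{n-ℓ(G)} = (-1)^{n-ℓ(F)}`, the sum ranging over all set
compositions `G` of `[n]` containing `F` (encoded via any finite set `S` whose members
are exactly the faces containing `F`). -/
theorem alternating_sum_over_containing_faces (n : ℕ) (F : SetComp n)
    (S : Finset (SetComp n)) (hS : ∀ G : SetComp n, G ∈ S ↔ F.le G) :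
    ∑ G ∈ S, (-1 : ℤ) ^ (n - G.len) = (-1) ^ (n - F.len) := by
  classical
  set φ : SetComp n → List (Finset (Fin F.blocks.length)) :=
    fun G => G.blocks.map F.idxOf with hφ
  have hmem_idx : ∀ (G : SetComp n), F.le G → ∀ C ∈ G.blocks, ∀ x ∈ C,
      ∃ i ∈ F.idxOf C, x ∈ F.blocks.get i := by
    intro G hle C hC x hx
    obtain ⟨B, hB, hxB⟩ := F.cover x
    obtain ⟨i, rfl⟩ := List.mem_iff_get.mp hB
    obtain ⟨C', hC', hBC'⟩ := hle _ hB
    have hCC' : C = C' := G.eq_of_mem_mem hC hC' hx (hBC' hxB)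
    subst hCC'
    exact ⟨i, Finset.mem_filter.mpr ⟨Finset.mem_univ _, hBC'⟩, hxB⟩
  have hC_eq : ∀ (G : SetComp n), F.le G → ∀ C ∈ G.blocks, ∀ x : Fin n,
      (x ∈ C ↔ ∃ i ∈ F.idxOf C, x ∈ F.blocks.get i) := by
    intro G hle C hC x
    refine ⟨hmem_idx G hle C hC x, ?_⟩
    rintro ⟨i, hi, hxi⟩
    exact (Finset.mem_filter.mp hi).2 hxi
  have hOSP : ∀ G ∈ S, IsOSP (Finset.univ : Finset (Fin F.blocks.length)) (φ G) := by
    intro G hG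
    have hle := (hS G).mp hG
    refine ⟨?_, ?_, fun _ _ => Finset.subset_univ _, ?_⟩
    · intro t ht
      rw [hφ] at ht
      simp only [List.mem_map] at ht
      obtain ⟨C, hC, rfl⟩ := ht
      obtain ⟨x, hx⟩ := G.nonempty C hC
      obtain ⟨i, hi, -⟩ := hmem_idx G hle C hC x hx
      exact ⟨i, hi⟩
    · rw [hφ, List.pairwise_map]
      refine G.pairwiseDisjoint.imp ?_
      intro C C' hdisj
      refine Finset.disjoint_left.mpr fun i hiC hiC' => ?_
      have h1 := (Finset.mem_filter.mp hiC).2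
      have h2 := (Finset.mem_filter.mp hiC').2
      obtain ⟨x, hx⟩ := F.nonempty _ (F.blocks.get_mem i)
      exact Finset.disjoint_left.mp hdisj (h1 hx) (h2 hx)
    · intro i _
      have hB : F.blocks.get i ∈ F.blocks := F.blocks.get_mem i
      obtain ⟨C, hC, hBC⟩ := hle _ hB
      exact ⟨F.idxOf C, List.mem_map_of_mem hC,
        Finset.mem_filter.mpr ⟨Finset.mem_univ _, hBC⟩⟩
  have hinj : ∀ G ∈ S, ∀ G' ∈ S, φ G = φ G' → G = G' := by
    intro G hG G' hG' h
    have hleG := (hS G).mp hG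
    have hleG' := (hS G').mp hG'
    apply SetComp.ext'
    have hlen : G.blocks.length = G'.blocks.length := by
      have := congrArg List.length h
      simpa [hφ] using this
    apply List.ext_get hlen
    intro p h1 h2
    have hidx : F.idxOf (G.blocks.get ⟨p, h1⟩) = F.idxOf (G'.blocks.get ⟨p, h2⟩) := by
      have hq := congrArg (fun L => L[p]?) h
      simp only [hφ, List.getElem?_map] at hq
      rw [List.getElem?_eq_getElem h1, List.getElem?_eq_getElem h2] at hq
      simpa using hq
    ext x
    rw [hC_eq G hleG _ (G.blocks.get_mem ⟨p, h1⟩) x,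
      hC_eq G' hleG' _ (G'.blocks.get_mem ⟨p, h2⟩) x, hidx]
  have hsurj : ∀ M, IsOSP (Finset.univ : Finset (Fin F.blocks.length)) M →
      ∃ G ∈ S, φ G = M := by
    intro M hM
    obtain ⟨h1, h2, -, h4⟩ := hM
    refine ⟨⟨M.map fun t => t.sup F.blocks.get, ?_, ?_, ?_⟩, ?_, ?_⟩
    · intro B hB
      simp only [List.mem_map] at hB
      obtain ⟨t, ht, rfl⟩ := hB
      obtain ⟨i, hi⟩ := h1 t ht
      obtain ⟨x, hx⟩ := F.nonempty _ (F.blocks.get_mem i)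
      exact ⟨x, Finset.mem_sup.mpr ⟨i, hi, hx⟩⟩
    · rw [List.pairwise_map]
      refine h2.imp ?_
      intro t t' hdisj
      refine Finset.disjoint_left.mpr fun x hx hx' => ?_
      obtain ⟨i, hit, hxi⟩ := Finset.mem_sup.mp hx
      obtain ⟨j, hjt, hxj⟩ := Finset.mem_sup.mp hx'
      have : i = j := F.index_eq hxi hxj
      subst this
      exact Finset.disjoint_left.mp hdisj hit hjt
    · intro x
      obtain ⟨B, hB, hxB⟩ := F.cover x
      obtain ⟨i, rfl⟩ := List.mem_iff_get.mp hB
      obtain ⟨t, ht, hit⟩ := h4 i (Finset.mem_univ i)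
      exact ⟨t.sup F.blocks.get, List.mem_map_of_mem ht,
        Finset.mem_sup.mpr ⟨i, hit, hxB⟩⟩
    · rw [hS]
      intro B hB
      obtain ⟨i, rfl⟩ := List.mem_iff_get.mp hB
      obtain ⟨t, ht, hit⟩ := h4 i (Finset.mem_univ i)
      exact ⟨t.sup F.blocks.get, List.mem_map_of_mem ht,
        fun x hx => Finset.mem_sup.mpr ⟨i, hit, hx⟩⟩
    · show (M.map fun t => t.sup F.blocks.get).map F.idxOf = M
      rw [List.map_map]
      conv_rhs => rw [← List.map_id M]
      apply List.map_congr_left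
      intro t ht
      show F.idxOf (t.sup F.blocks.get) = t
      ext i
      simp only [SetComp.idxOf, Finset.mem_filter, Finset.mem_univ, true_and]
      constructor
      · intro hsub
        obtain ⟨x, hx⟩ := F.nonempty _ (F.blocks.get_mem i)
        obtain ⟨j, hjt, hxj⟩ := Finset.mem_sup.mp (hsub hx)
        have : i = j := F.index_eq hx hxj
        subst this
        exact hjt
      · intro hit x hx
        exact Finset.mem_sup.mpr ⟨i, hit, hx⟩
  set T := S.image φ with hTdef
  have hT : ∀ M, M ∈ T ↔ IsOSP (Finset.univ : Finset (Fin F.blocks.length)) M := by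
    intro M
    rw [hTdef]
    simp only [Finset.mem_image]
    constructor
    · rintro ⟨G, hG, rfl⟩; exact hOSP G hG
    · intro h
      obtain ⟨G, hG, hφG⟩ := hsurj M h
      exact ⟨G, hG, hφG⟩
  have hsum := osp_sum (Finset.univ : Finset (Fin F.blocks.length)).card
    (Finset.univ : Finset (Fin F.blocks.length)) rfl T hT
  have huniv : (Finset.univ : Finset (Fin F.blocks.length)).card = F.len := by simp
  have htrans : ∑ M ∈ T, (-1 : ℤ) ^ M.length = ∑ G ∈ S, (-1 : ℤ) ^ G.len := by
    rw [hTdef, Finset.sum_image hinj]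
    apply Finset.sum_congr rfl
    intro G _
    rw [hφ]
    simp
  calc ∑ G ∈ S, (-1 : ℤ) ^ (n - G.len)
      = ∑ G ∈ S, (-1 : ℤ) ^ n * (-1) ^ G.len :=
        Finset.sum_congr rfl fun G _ => neg_one_pow_sub G.len_le
    _ = (-1) ^ n * ∑ G ∈ S, (-1 : ℤ) ^ G.len := (Finset.mul_sum _ _ _).symm
    _ = (-1) ^ n * ∑ M ∈ T, (-1 : ℤ) ^ M.length := by rw [htrans]
    _ = (-1) ^ n * (-1) ^ F.len := by rw [hsum, huniv]
    _ = (-1) ^ (n - F.len) := (neg_one_pow_sub F.len_le).symm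

end CardShuffle
end
end
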